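/- For every real δ > 0 and every z with 0 ≤ z ≤ δ, the ratio ϖ_l(z) = m_l(z)/m, where m_l(z) = ∫_{{ξ∈ℝ² : ‖ξ‖≤δ, ξ₂≥z}} ‖ξ‖² dξ and m = ∫_{{ξ∈ℝ² : ‖ξ‖≤δ}} ‖ξ‖² dξ, equals (1/π)·[arccos(z/δ) − z(δ² − z²)^{3/2}/(3δ⁴) − z³√(δ² − z²)/δ⁴]. -/

import Mathlib

open MeasureTheory Real

noncomputable def Gfun (δ a : ℝ) : ℝ :=
  δ ^ 4 / 2 * Real.arccos (a / δ) - a * Real.sqrt (δ ^ 2 - a ^ 2) ^ 3 / 6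
    - a ^ 3 * Real.sqrt (δ ^ 2 - a ^ 2) / 2

lemma Gfun_cont (δ : ℝ) : Continuous fun a : ℝ => Gfun δ a := by
  unfold Gfun
  continuity

lemma lemA (δ : ℝ) (hδ : 0 < δ) (a : ℝ) (ha : -δ ≤ a) (ha' : a ≤ δ) :
    ∫ y in a..δ, (2 / 3 * Real.sqrt (δ ^ 2 - y ^ 2) ^ 3 + 2 * y ^ 2 * Real.sqrt (δ ^ 2 - y ^ 2))
      = Gfun δ a := by
  have hFδ : Gfun δ δ = 0 := by
    simp [Gfun, div_self hδ.ne', Real.arccos_one, Real.sqrt_eq_zero']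
  have key := intervalIntegral.integral_eq_sub_of_hasDerivAt_of_le (a := a) (b := δ)
    (f := fun y => -Gfun δ y)
    (f' := fun y => 2 / 3 * Real.sqrt (δ ^ 2 - y ^ 2) ^ 3 + 2 * y ^ 2 * Real.sqrt (δ ^ 2 - y ^ 2))
    ha' ((Gfun_cont δ).neg.continuousOn) ?_ ?_
  · rw [key]
    show -Gfun δ δ - -Gfun δ a = Gfun δ a
    rw [hFδ]; ring
  · intro y hy
    have hy1 : -δ < y := lt_of_le_of_lt ha hy.1
    have hy2 : y < δ := hy.2
    have hpos : 0 < δ ^ 2 - y ^ 2 := by nlinarith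
    set s := Real.sqrt (δ ^ 2 - y ^ 2) with hs_def
    have hs : 0 < s := Real.sqrt_pos.mpr hpos
    have hs2 : s ^ 2 = δ ^ 2 - y ^ 2 := Real.sq_sqrt hpos.le
    have hroot : Real.sqrt (1 - (y / δ) ^ 2) = s / δ := by
      rw [show 1 - (y / δ) ^ 2 = (δ ^ 2 - y ^ 2) / δ ^ 2 by field_simp]
      rw [Real.sqrt_div hpos.le, Real.sqrt_sq hδ.le]
    have hdiv : HasDerivAt (fun y : ℝ => y / δ) (1 / δ) y := by
      simpa using (hasDerivAt_id y).div_const δ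
    have harccos : HasDerivAt (fun y : ℝ => Real.arccos (y / δ))
        (-(1 / Real.sqrt (1 - (y / δ) ^ 2)) * (1 / δ)) y := by
      apply HasDerivAt.comp y (Real.hasDerivAt_arccos ?_ ?_) hdiv
      · intro h
        have : y = -δ := by field_simp at h; linarith
        exact absurd this (by intro hh; rw [hh] at hy1; exact lt_irrefl _ hy1)
      · intro h
        field_simp at h
        exact absurd h hy2.ne
    have hsqrt : HasDerivAt (fun y : ℝ => Real.sqrt (δ ^ 2 - y ^ 2))
        (1 / (2 * s) * (-(2 * y))) y := by
      apply HasDerivAt.comp y (Real.hasDerivAt_sqrt hpos.ne')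
      simpa using ((hasDerivAt_pow 2 y).const_sub (δ ^ 2))
    have H : HasDerivAt (fun y => -Gfun δ y)
        (-(δ ^ 4 / 2 * (-(1 / Real.sqrt (1 - (y / δ) ^ 2)) * (1 / δ))
          - ((1) * Real.sqrt (δ ^ 2 - y ^ 2) ^ 3
             + y * (3 * Real.sqrt (δ ^ 2 - y ^ 2) ^ 2 * (1 / (2 * s) * (-(2 * y))))) / 6
          - ((3 * y ^ 2) * Real.sqrt (δ ^ 2 - y ^ 2)
             + y ^ 3 * (1 / (2 * s) * (-(2 * y)))) / 2)) y := by
      unfold Gfun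
      apply HasDerivAt.neg
      exact (((harccos.const_mul (δ ^ 4 / 2)).sub
        (((hasDerivAt_id y).mul (hsqrt.pow 3)).div_const 6)).sub
        (((hasDerivAt_pow 3 y).mul hsqrt).div_const 2))
    convert H using 1
    case e'_4 => rfl
    case e'_5 => rfl
    rw [hroot, ← hs_def]
    have e1 : -(1 / (s / δ)) * (1 / δ) = -(1 / s) := by
      field_simp
    rw [e1, show δ ^ 4 = (s ^ 2 + y ^ 2) ^ 2 by rw [hs2]; ring]
    field_simp
    ring
  · apply Continuous.intervalIntegrable
    fun_prop

lemma segB (δ a : ℝ) (hδ : 0 < δ) (ha : -δ ≤ a) (ha' : a ≤ δ) :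
    ∫ p in {p : ℝ × ℝ | p.1 ^ 2 + p.2 ^ 2 ≤ δ ^ 2 ∧ a ≤ p.2}, (p.1 ^ 2 + p.2 ^ 2) = Gfun δ a := by
  set A : Set (ℝ × ℝ) := {p | p.1 ^ 2 + p.2 ^ 2 ≤ δ ^ 2 ∧ a ≤ p.2} with hA_def
  have hAclosed : IsClosed A := by
    rw [hA_def, Set.setOf_and]
    exact (isClosed_le (by fun_prop) continuous_const).inter
      (isClosed_le continuous_const continuous_snd)
  have hAsub : A ⊆ Metric.closedBall 0 δ := by
    intro p hp
    obtain ⟨h1, _⟩ := hp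
    simp only [Metric.mem_closedBall, dist_zero_right, Prod.norm_def, Real.norm_eq_abs]
    rw [max_le_iff]
    constructor <;> rw [abs_le] <;> constructor <;> nlinarith [sq_nonneg p.1, sq_nonneg p.2]
  have hAc : IsCompact A :=
    Metric.isCompact_of_isClosed_isBounded hAclosed
      (Metric.isBounded_closedBall.subset hAsub)
  have hAm : MeasurableSet A := hAclosed.measurableSet
  have hf : Continuous fun p : ℝ × ℝ => p.1 ^ 2 + p.2 ^ 2 := by fun_prop
  have hInt : IntegrableOn (fun p : ℝ × ℝ => p.1 ^ 2 + p.2 ^ 2) A :=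
    hf.continuousOn.integrableOn_compact hAc
  rw [← integral_indicator hAm]
  rw [show (volume : Measure (ℝ × ℝ)) = (volume : Measure ℝ).prod volume from
    Measure.volume_eq_prod ℝ ℝ]
  rw [integral_prod_symm _ (by
    rw [integrable_indicator_iff hAm]
    rwa [← Measure.volume_eq_prod])]
  have hinner : ∀ y : ℝ,
      (∫ x : ℝ, A.indicator (fun p : ℝ × ℝ => p.1 ^ 2 + p.2 ^ 2) (x, y))
      = (Set.Icc a δ).indicator
          (fun y => 2 / 3 * Real.sqrt (δ ^ 2 - y ^ 2) ^ 3
            + 2 * y ^ 2 * Real.sqrt (δ ^ 2 - y ^ 2)) y := by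
    intro y
    have hslice : (fun x : ℝ => A.indicator (fun p : ℝ × ℝ => p.1 ^ 2 + p.2 ^ 2) (x, y))
        = ({x : ℝ | x ^ 2 + y ^ 2 ≤ δ ^ 2 ∧ a ≤ y}).indicator (fun x => x ^ 2 + y ^ 2) := by
      funext x
      simp [Set.indicator_apply, hA_def]
    rw [hslice]
    by_cases hy : y ∈ Set.Icc a δ
    · obtain ⟨hya, hyδ⟩ := hy
      have hyδ' : -δ ≤ y := ha.trans hya
      have hpos : 0 ≤ δ ^ 2 - y ^ 2 := by nlinarith
      set s := Real.sqrt (δ ^ 2 - y ^ 2) with hs_def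
      have hs0 : 0 ≤ s := Real.sqrt_nonneg _
      have hs2 : s ^ 2 = δ ^ 2 - y ^ 2 := Real.sq_sqrt hpos
      have hset : {x : ℝ | x ^ 2 + y ^ 2 ≤ δ ^ 2 ∧ a ≤ y} = Set.Icc (-s) s := by
        ext x
        simp only [Set.mem_setOf_eq, Set.mem_Icc, hya, and_true]
        constructor
        · intro h
          constructor <;> nlinarith
        · rintro ⟨h1, h2⟩
          nlinarith
      rw [hset, Set.indicator_of_mem (Set.mem_Icc.mpr ⟨hya, hyδ⟩), integral_indicator measurableSet_Icc]
      rw [MeasureTheory.integral_Icc_eq_integral_Ioc,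
        ← intervalIntegral.integral_of_le (by linarith : -s ≤ s)]
      rw [intervalIntegral.integral_add (intervalIntegral.intervalIntegrable_pow 2)
        (intervalIntegrable_const)]
      rw [integral_pow, intervalIntegral.integral_const]
      simp only [smul_eq_mul]
      norm_num
      ring
    · have hempty : {x : ℝ | x ^ 2 + y ^ 2 ≤ δ ^ 2 ∧ a ≤ y} = ∅ := by
        ext x
        simp only [Set.mem_setOf_eq, Set.mem_empty_iff_false, iff_false, not_and]
        intro h1 h2
        apply hy
        refine Set.mem_Icc.mpr ⟨h2, ?_⟩
        nlinarith [sq_nonneg x]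
      rw [hempty, Set.indicator_of_notMem hy]
      simp
  rw [integral_congr_ae (Filter.Eventually.of_forall hinner)]
  rw [integral_indicator measurableSet_Icc]
  rw [MeasureTheory.integral_Icc_eq_integral_Ioc, ← intervalIntegral.integral_of_le ha']
  exact lemA δ hδ a ha ha'

noncomputable def Tmap : EuclideanSpace ℝ (Fin 2) ≃ᵐ ℝ × ℝ :=
  (MeasurableEquiv.toLp 2 (Fin 2 → ℝ)).symm.trans MeasurableEquiv.finTwoArrow

lemma Tmap_symm_apply (p : ℝ × ℝ) (i : Fin 2) : Tmap.symm p i = ![p.1, p.2] i := rfl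

lemma Tmap_norm_sq (p : ℝ × ℝ) : ‖Tmap.symm p‖ ^ 2 = p.1 ^ 2 + p.2 ^ 2 := by
  rw [EuclideanSpace.norm_eq]
  rw [Real.sq_sqrt (by positivity)]
  simp [Tmap_symm_apply, Fin.sum_univ_two, sq_abs]

lemma Tmap_mp : MeasurePreserving (Tmap.symm) volume volume :=
  MeasurePreserving.symm _
    ((volume_preserving_finTwoArrow ℝ).comp (EuclideanSpace.volume_preserving_symm_measurableEquiv_toLp (Fin 2)))

lemma transfer (δ a : ℝ) (hδ : 0 < δ) :
    ∫ ξ in {ξ : EuclideanSpace ℝ (Fin 2) | ‖ξ‖ ≤ δ ∧ a ≤ ξ 1}, ‖ξ‖ ^ 2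
      = ∫ p in {p : ℝ × ℝ | p.1 ^ 2 + p.2 ^ 2 ≤ δ ^ 2 ∧ a ≤ p.2}, (p.1 ^ 2 + p.2 ^ 2) := by
  rw [← Tmap_mp.setIntegral_preimage_emb Tmap.symm.measurableEmbedding
    (fun ξ => ‖ξ‖ ^ 2) _]
  have hset : Tmap.symm ⁻¹' {ξ : EuclideanSpace ℝ (Fin 2) | ‖ξ‖ ≤ δ ∧ a ≤ ξ 1}
      = {p : ℝ × ℝ | p.1 ^ 2 + p.2 ^ 2 ≤ δ ^ 2 ∧ a ≤ p.2} := by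
    ext p
    simp only [Set.mem_preimage, Set.mem_setOf_eq]
    have h1 := Tmap_norm_sq p
    have h2 : Tmap.symm p 1 = p.2 := by rw [Tmap_symm_apply]; simp
    rw [h2]
    constructor
    · rintro ⟨hn, hz⟩
      exact ⟨by nlinarith [norm_nonneg (Tmap.symm p)], hz⟩
    · rintro ⟨hn, hz⟩
      refine ⟨?_, hz⟩
      nlinarith [norm_nonneg (Tmap.symm p)]
  rw [hset]
  exact setIntegral_congr_fun (by
    apply IsClosed.measurableSet
    rw [Set.setOf_and]
    exact (isClosed_le (by fun_prop) continuous_const).inter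
      (isClosed_le continuous_const continuous_snd))
    (fun p _ => Tmap_norm_sq p)

lemma ball_eq_seg (δ : ℝ) (hδ : 0 < δ) :
    {ξ : EuclideanSpace ℝ (Fin 2) | ‖ξ‖ ≤ δ}
      = {ξ : EuclideanSpace ℝ (Fin 2) | ‖ξ‖ ≤ δ ∧ -δ ≤ ξ 1} := by
  ext ξ
  simp only [Set.mem_setOf_eq, iff_self_and]
  intro hn
  have h1 : (ξ 1) ^ 2 ≤ ‖ξ‖ ^ 2 := by
    rw [EuclideanSpace.norm_eq, Real.sq_sqrt (by positivity)]
    simp only [Fin.sum_univ_two, Real.norm_eq_abs, sq_abs]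
    nlinarith [sq_nonneg (ξ 0)]
  nlinarith [norm_nonneg ξ]

theorem circular_segment_moment_ratio (δ z : ℝ) (hδ : 0 < δ) (hz0 : 0 ≤ z) (hzδ : z ≤ δ) :
    (∫ ξ in {ξ : EuclideanSpace ℝ (Fin 2) | ‖ξ‖ ≤ δ ∧ z ≤ ξ 1}, ‖ξ‖ ^ 2) /
      (∫ ξ in {ξ : EuclideanSpace ℝ (Fin 2) | ‖ξ‖ ≤ δ}, ‖ξ‖ ^ 2)
      = (1 / π) * (Real.arccos (z / δ)
          - z * (δ ^ 2 - z ^ 2) ^ ((3 : ℝ) / 2) / (3 * δ ^ 4)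
          - z ^ 3 * Real.sqrt (δ ^ 2 - z ^ 2) / δ ^ 4) := by
  have h1 : ∫ ξ in {ξ : EuclideanSpace ℝ (Fin 2) | ‖ξ‖ ≤ δ ∧ z ≤ ξ 1}, ‖ξ‖ ^ 2 = Gfun δ z := by
    rw [transfer δ z hδ]
    exact segB δ z hδ (by linarith) hzδ
  have h2 : ∫ ξ in {ξ : EuclideanSpace ℝ (Fin 2) | ‖ξ‖ ≤ δ}, ‖ξ‖ ^ 2 = Gfun δ (-δ) := by
    rw [ball_eq_seg δ hδ, transfer δ (-δ) hδ]
    exact segB δ (-δ) hδ le_rfl (by linarith)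
  rw [h1, h2]
  have hG : Gfun δ (-δ) = δ ^ 4 / 2 * π := by
    simp [Gfun, neg_div, div_self hδ.ne', Real.arccos_neg_one,
      show δ ^ 2 - (-δ) ^ 2 = 0 by ring]
  have h32 : (δ ^ 2 - z ^ 2) ^ ((3 : ℝ) / 2) = Real.sqrt (δ ^ 2 - z ^ 2) ^ 3 := by
    have hnn : (0:ℝ) ≤ δ ^ 2 - z ^ 2 := by nlinarith
    rw [show ((3:ℝ)/2) = (1/2 : ℝ) * ((3:ℕ):ℝ) by norm_num, Real.rpow_mul hnn,
      Real.rpow_natCast, ← Real.sqrt_eq_rpow]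
  rw [hG, h32, Gfun]
  have hπ : π ≠ 0 := Real.pi_ne_zero
  field_simp
  ring
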